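/- arXiv:1104.0547 — 2 statements merged into one kernel-verified Lean document; each statement's English description precedes it below -/
import Mathlib

section
/- The function μ ↦ log μ − ψ(μ) is strictly decreasing on (0, ∞), where ψ is the digamma function; moreover log μ − ψ(μ) → ∞ as μ → 0⁺ and log μ − ψ(μ) → 0 as μ → ∞. -/
open Real Filter

/-- The digamma function `ψ = Γ'/Γ`. -/
noncomputable def digamma (x : ℝ) : ℝ := deriv Real.Gamma x / Real.Gamma x

namespace DigammaAux

open Set

lemma hasDerivAt_logGamma {x : ℝ} (hx : 0 < x) :
    HasDerivAt (fun t => Real.log (Real.Gamma t)) (digamma x) x := by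
  have hne : ∀ m : ℕ, x ≠ -m := by
    intro m h
    have : (0:ℝ) ≤ (m:ℝ) := Nat.cast_nonneg m
    nlinarith
  have hG : HasDerivAt Real.Gamma (deriv Real.Gamma x) x :=
    (Real.differentiableAt_Gamma hne).hasDerivAt
  have hpos := Real.Gamma_pos_of_pos hx
  have h := (Real.hasDerivAt_log hpos.ne').comp x hG
  simpa [digamma, div_eq_inv_mul, Function.comp_def] using h

lemma digamma_add_one {x : ℝ} (hx : 0 < x) :
    digamma (x + 1) = digamma x + 1 / x := by
  have h1 : HasDerivAt (fun t : ℝ => Real.log (Real.Gamma (t + 1))) (digamma (x + 1)) x := by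
    have := (hasDerivAt_logGamma (by linarith : (0:ℝ) < x + 1)).comp x
      ((hasDerivAt_id x).add_const 1)
    simpa [Function.comp_def] using this
  have h2 : HasDerivAt (fun t : ℝ => Real.log t + Real.log (Real.Gamma t))
      (x⁻¹ + digamma x) x :=
    (Real.hasDerivAt_log hx.ne').add (hasDerivAt_logGamma hx)
  have heq : (fun t : ℝ => Real.log t + Real.log (Real.Gamma t)) =ᶠ[nhds x]
      (fun t : ℝ => Real.log (Real.Gamma (t + 1))) := by
    filter_upwards [eventually_gt_nhds hx] with t ht
    rw [Real.Gamma_add_one ht.ne', Real.log_mul ht.ne' (Real.Gamma_pos_of_pos ht).ne']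
  have h2' : HasDerivAt (fun t : ℝ => Real.log (Real.Gamma (t + 1))) (x⁻¹ + digamma x) x :=
    h2.congr_of_eventuallyEq heq.symm
  have := h1.unique h2'
  rw [this, one_div]; ring

lemma digamma_le_log {x : ℝ} (hx : 0 < x) : digamma x ≤ Real.log x := by
  have h := Real.convexOn_log_Gamma.le_slope_of_hasDerivAt (mem_Ioi.2 hx)
    (mem_Ioi.2 (by linarith : (0:ℝ) < x + 1)) (lt_add_one x) (hasDerivAt_logGamma hx)
  rw [slope_def_field] at h
  have : ((Real.log ∘ Real.Gamma) (x + 1) - (Real.log ∘ Real.Gamma) x) / (x + 1 - x)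
      = Real.log x := by
    simp only [Function.comp]
    rw [Real.Gamma_add_one hx.ne', Real.log_mul hx.ne' (Real.Gamma_pos_of_pos hx).ne']
    ring
  linarith [h.trans_eq this]

lemma log_le_digamma_add {x : ℝ} (hx : 0 < x) : Real.log x ≤ digamma x + 1 / x := by
  have h := Real.convexOn_log_Gamma.slope_le_of_hasDerivAt (mem_Ioi.2 hx)
    (mem_Ioi.2 (by linarith : (0:ℝ) < x + 1)) (lt_add_one x)
    (hasDerivAt_logGamma (by linarith : (0:ℝ) < x + 1))
  rw [slope_def_field] at h
  have he : ((Real.log ∘ Real.Gamma) (x + 1) - (Real.log ∘ Real.Gamma) x) / (x + 1 - x)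
      = Real.log x := by
    simp only [Function.comp]
    rw [Real.Gamma_add_one hx.ne', Real.log_mul hx.ne' (Real.Gamma_pos_of_pos hx).ne']
    ring
  rw [he, digamma_add_one hx] at h
  linarith

lemma digamma_add_nat {x : ℝ} (hx : 0 < x) (n : ℕ) :
    digamma (x + n) = digamma x + ∑ k ∈ Finset.range n, 1 / (x + k) := by
  induction n with
  | zero => simp
  | succ n ih =>
    have hxn : 0 < x + (n:ℝ) := by positivity
    rw [Finset.sum_range_succ]
    have hcast : x + ((n:ℕ) + 1 : ℕ) = x + (n:ℝ) + 1 := by push_cast; ring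
    rw [hcast, digamma_add_one hxn, ih]
    ring

lemma key_ineq {a b : ℝ} (ha : 0 < a) (hab : a < b) :
    (Real.log b - Real.log a) - (Real.log (b + 1) - Real.log (a + 1)) < 1 / a - 1 / b := by
  have hb : 0 < b := ha.trans hab
  have h1 : Real.log b - Real.log a - (Real.log (b + 1) - Real.log (a + 1))
      = Real.log ((b * (a + 1)) / (a * (b + 1))) := by
    rw [Real.log_div (by positivity) (by positivity), Real.log_mul hb.ne' (by positivity),
      Real.log_mul ha.ne' (by positivity)]
    ring
  have h2 : Real.log ((b * (a + 1)) / (a * (b + 1))) ≤ (b * (a + 1)) / (a * (b + 1)) - 1 :=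
    Real.log_le_sub_one_of_pos (by positivity)
  have h3 : (b * (a + 1)) / (a * (b + 1)) - 1 = (b - a) / (a * (b + 1)) := by
    field_simp; ring
  have h4 : (b - a) / (a * (b + 1)) < (b - a) / (a * b) :=
    div_lt_div_of_pos_left (by linarith) (by positivity) (by nlinarith)
  have h5 : (b - a) / (a * b) = 1 / a - 1 / b := by field_simp
  rw [h1]
  calc Real.log ((b * (a + 1)) / (a * (b + 1))) ≤ (b - a) / (a * (b + 1)) := by rw [← h3]; exact h2
    _ < (b - a) / (a * b) := h4
    _ = 1 / a - 1 / b := h5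

lemma log_sub_le_digamma_sub {a b : ℝ} (ha : 0 < a) (hab : a < b) :
    Real.log b - Real.log a ≤ digamma b - digamma a := by
  have hb : 0 < b := ha.trans hab
  have key : ∀ n : ℕ, Real.log b - Real.log a - 1 / (b + n) ≤ digamma b - digamma a := by
    intro n
    have han : 0 < a + (n:ℝ) := by positivity
    have hbn : 0 < b + (n:ℝ) := by positivity
    have hdec : digamma b - digamma a
        = (digamma (b + n) - digamma (a + n))
          + ∑ k ∈ Finset.range n, (1 / (a + k) - 1 / (b + k)) := by
      have h1 := digamma_add_nat ha n
      have h2 := digamma_add_nat hb n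
      rw [Finset.sum_sub_distrib]
      linarith
    have ht1 : Real.log (b + n) - 1 / (b + n) ≤ digamma (b + n) := by
      linarith [log_le_digamma_add hbn]
    have ht2 : digamma (a + n) ≤ Real.log (a + n) := digamma_le_log han
    have hterm : ∀ k ∈ Finset.range n,
        ((Real.log (b + k) - Real.log (a + k)) - (Real.log (b + (k+1:ℕ)) - Real.log (a + (k+1:ℕ))))
          ≤ 1 / (a + k) - 1 / (b + k) := by
      intro k _
      have hak : 0 < a + (k:ℝ) := by positivity
      have habk : a + (k:ℝ) < b + (k:ℝ) := by linarith
      have := (key_ineq hak habk).le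
      push_cast
      rw [← add_assoc, ← add_assoc]; exact this
    have hsum := Finset.sum_le_sum hterm
    rw [Finset.sum_range_sub' (fun k : ℕ => Real.log (b + k) - Real.log (a + k)) n] at hsum
    simp only [Nat.cast_zero, add_zero] at hsum
    linarith
  have htend : Tendsto (fun n : ℕ => Real.log b - Real.log a - 1 / (b + n)) atTop
      (nhds (Real.log b - Real.log a)) := by
    have h1 : Tendsto (fun n : ℕ => b + (n:ℝ)) atTop atTop :=
      tendsto_atTop_add_const_left _ b tendsto_natCast_atTop_atTop
    have h2 : Tendsto (fun n : ℕ => 1 / (b + (n:ℝ))) atTop (nhds 0) := by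
      simpa [one_div, Function.comp_def] using tendsto_inv_atTop_zero.comp h1
    simpa using tendsto_const_nhds.sub h2
  exact le_of_tendsto htend (Eventually.of_forall key)

lemma log_sub_lt_digamma_sub {a b : ℝ} (ha : 0 < a) (hab : a < b) :
    Real.log b - Real.log a < digamma b - digamma a := by
  have hb : 0 < b := ha.trans hab
  have h1 := digamma_add_one ha
  have h2 := digamma_add_one hb
  have h3 := log_sub_le_digamma_sub (by linarith : (0:ℝ) < a + 1) (by linarith : a + 1 < b + 1)
  have h4 := key_ineq ha hab
  linarith

end DigammaAux

/-- The function `μ ↦ log μ − ψ(μ)` is strictly decreasing on `(0, ∞)`,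
tends to `∞` as `μ → 0⁺`, and tends to `0` as `μ → ∞`. -/
theorem log_sub_digamma_strictAnti :
    StrictAntiOn (fun x : ℝ => Real.log x - digamma x) (Set.Ioi 0)
    ∧ Tendsto (fun x : ℝ => Real.log x - digamma x) (nhdsWithin 0 (Set.Ioi 0)) atTop
    ∧ Tendsto (fun x : ℝ => Real.log x - digamma x) atTop (nhds 0) := by
  open DigammaAux in
  refine ⟨?_, ?_, ?_⟩
  · intro x hx y hy hxy
    have := log_sub_lt_digamma_sub (Set.mem_Ioi.1 hx) hxy
    simp only
    linarith
  · -- limit at 0⁺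
    have hbound : ∀ x : ℝ, 0 < x →
        1 / x + (Real.log x - Real.log (x + 1)) ≤ Real.log x - digamma x := by
      intro x hx
      have h1 := digamma_add_one hx
      have h2 := digamma_le_log (by linarith : (0:ℝ) < x + 1)
      linarith
    have h1 : Tendsto (fun x : ℝ => 1 / x + Real.log x) (nhdsWithin 0 (Set.Ioi 0)) atTop := by
      have hcomp : ∀ x : ℝ, 1 / x + Real.log x = x⁻¹ - Real.log x⁻¹ := by
        intro x; rw [Real.log_inv, one_div]; ring
      have hu : Tendsto (fun u : ℝ => u - Real.log u) atTop atTop := by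
        have hev : ∀ᶠ u : ℝ in atTop, u / 2 ≤ u - Real.log u := by
          filter_upwards [Real.isLittleO_log_id_atTop.def (by norm_num : (0:ℝ) < 1/2),
            eventually_ge_atTop (0:ℝ)] with u hu hu0
          simp only [Real.norm_eq_abs, id] at hu
          rw [abs_of_nonneg hu0] at hu
          have := (abs_le.1 hu).2
          linarith
        exact tendsto_atTop_mono' _ hev (tendsto_id.atTop_div_const (by norm_num))
      have hinv : Tendsto (fun x : ℝ => x⁻¹) (nhdsWithin 0 (Set.Ioi 0)) atTop :=
        tendsto_inv_nhdsGT_zero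
      refine (hu.comp hinv).congr fun x => ?_
      simp only [Function.comp, Real.log_inv, one_div]
      ring
    have h2 : Tendsto (fun x : ℝ => -Real.log (x + 1)) (nhdsWithin 0 (Set.Ioi 0)) (nhds 0) := by
      have hl : Tendsto Real.log (nhds 1) (nhds (Real.log 1)) :=
        (Real.continuousAt_log one_ne_zero).tendsto
      have ha : Tendsto (fun x : ℝ => x + 1) (nhds 0) (nhds 1) := by
        simpa [Pi.add_def] using ((continuous_id.add continuous_const).tendsto (0:ℝ))
      have hc : Tendsto (fun x : ℝ => -Real.log (x + 1)) (nhds 0) (nhds 0) := by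
        have := (hl.comp ha).neg
        simpa [Function.comp] using this
      exact hc.mono_left nhdsWithin_le_nhds
    have h3 : Tendsto (fun x : ℝ => 1 / x + (Real.log x - Real.log (x + 1)))
        (nhdsWithin 0 (Set.Ioi 0)) atTop := by
      have hev : ∀ᶠ x : ℝ in nhdsWithin 0 (Set.Ioi 0), (-1:ℝ) ≤ -Real.log (x + 1) :=
        h2.eventually (eventually_ge_nhds (by norm_num : (-1:ℝ) < 0))
      have := Filter.tendsto_atTop_add_right_of_le' _ (-1 : ℝ) h1 hev
      refine this.congr (fun x => by ring)
    refine tendsto_atTop_mono' _ ?_ h3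
    filter_upwards [self_mem_nhdsWithin] with x hx
    exact hbound x (Set.mem_Ioi.1 hx)
  · -- limit at ∞
    have hup : ∀ x : ℝ, 0 < x → Real.log x - digamma x ≤ 1 / x := fun x hx => by
      linarith [log_le_digamma_add hx]
    have hlo : ∀ x : ℝ, 0 < x → 0 ≤ Real.log x - digamma x := fun x hx => by
      linarith [digamma_le_log hx]
    refine tendsto_of_tendsto_of_tendsto_of_le_of_le' tendsto_const_nhds
      (tendsto_inv_atTop_zero.congr fun x => (one_div x).symm) ?_ ?_
    · filter_upwards [eventually_gt_atTop (0:ℝ)] with x hx using hlo x hx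
    · filter_upwards [eventually_gt_atTop (0:ℝ)] with x hx using hup x hx
end

section
/- For the binary multiplicative block channel with block length K ≥ 1, state probability r = Pr[S=1] ∈ (0, 1/2), and input distribution assigning probability 1−p to the all-zero block and p/(2^K − 1) to each nonzero block, the mutual information per channel use equals (1/K)·[H₂(pr) + p·(r·log(2^K − 1) − H₂(r))], where H₂ is the binary entropy function. -/
open Finset

/-- The binary entropy function (natural logarithm). -/
noncomputable def binEnt (q : ℝ) : ℝ := -q * Real.log q - (1 - q) * Real.log (1 - q)

lemma aux_log (a b : ℝ) (ha : 0 ≤ a) (hb : 0 < b) :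
    a * Real.log (a / (a * b)) = -(a * Real.log b) := by
  rcases ha.eq_or_lt with h | h
  · simp [← h]
  · have : a / (a * b) = b⁻¹ := by field_simp
    rw [this, Real.log_inv]; ring

/-- For the binary multiplicative block channel `y = s·x` (componentwise, block
length `K`, state `s ∈ {0,1}` with `Pr[s = 1] = r`), under the input
distribution placing mass `1 − p` on the all-zero block and `p/(2^K − 1)` on
each nonzero block, the mutual information per channel use equals
`(1/K)·[H₂(pr) + p·(r·log(2^K − 1) − H₂(r))]`. -/
theorem binary_multiplicative_mutual_info
    (K : ℕ) (hK : 1 ≤ K) (r p : ℝ) (hr0 : 0 < r) (hr : r < 1 / 2)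
    (hp0 : 0 < p) (hp1 : p ≤ 1)
    (Px : (Fin K → Bool) → ℝ)
    (hPx : Px = fun x => if x = (fun _ => false) then 1 - p else p / (2 ^ K - 1))
    (Pxy : (Fin K → Bool) → (Fin K → Bool) → ℝ)
    (hPxy : Pxy = fun x y => Px x *
      (r * (if y = x then 1 else 0)
        + (1 - r) * (if y = (fun _ => false) then 1 else 0)))
    (Py : (Fin K → Bool) → ℝ) (hPy : Py = fun y => ∑ x, Pxy x y) :
    (1 / (K : ℝ)) * (∑ x, ∑ y, Pxy x y * Real.log (Pxy x y / (Px x * Py y)))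
      = (1 / (K : ℝ)) * (binEnt (p * r)
          + p * (r * Real.log ((2 : ℝ) ^ K - 1) - binEnt r)) := by
  have h2K : (2:ℝ) ≤ 2 ^ K := by
    calc (2:ℝ) = 2 ^ 1 := (pow_one 2).symm
    _ ≤ 2 ^ K := pow_le_pow_right₀ one_le_two hK
  have hN0 : (0:ℝ) < 2 ^ K - 1 := by linarith
  set N : ℝ := 2 ^ K - 1 with hNdef
  have hNne : N ≠ 0 := ne_of_gt hN0
  set z : Fin K → Bool := (fun _ => false) with hzdef
  have h1p : 0 ≤ 1 - p := by linarith
  have hprpos : 0 < p * r := mul_pos hp0 hr0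
  have hprr : p * r ≤ r := by nlinarith
  have h1pr : 0 < 1 - p * r := by linarith
  have h1r : 0 < 1 - r := by linarith
  have hcard : ((univ.erase z).card : ℝ) = N := by
    rw [Finset.card_erase_of_mem (mem_univ z), Finset.card_univ]
    have : Fintype.card (Fin K → Bool) = 2 ^ K := by simp
    rw [this, Nat.cast_sub Nat.one_le_two_pow]
    push_cast
    rfl
  have hPxz : Px z = 1 - p := by rw [hPx]; simp
  have hPxx : ∀ x, x ≠ z → Px x = p / N := by
    intro x hx; rw [hPx]; simp [hx]
  have hsum : ∑ x, Px x = 1 := by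
    rw [← Finset.add_sum_erase _ Px (mem_univ z), hPxz,
        Finset.sum_congr rfl (fun x hx => hPxx x (Finset.ne_of_mem_erase hx)),
        Finset.sum_const, nsmul_eq_mul, hcard]
    field_simp
    ring
  have hPxy_zz : Pxy z z = 1 - p := by
    rw [hPxy]; simp [hPxz]
    all_goals ring
  have hPxy_z : ∀ y, y ≠ z → Pxy z y = 0 := by
    intro y hy; rw [hPxy]; simp [hy]
  have hPxy_xx : ∀ x, x ≠ z → Pxy x x = p / N * r := by
    intro x hx; rw [hPxy]; simp [hPxx x hx, hx]
    all_goals ring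
  have hPxy_xz : ∀ x, x ≠ z → Pxy x z = p / N * (1 - r) := by
    intro x hx; rw [hPxy]; simp [hPxx x hx, Ne.symm hx]
    all_goals ring
  have hPxy_other : ∀ x y, y ≠ x → y ≠ z → Pxy x y = 0 := by
    intro x y h1 h2; rw [hPxy]; simp [h1, h2]
  have hPyz : Py z = 1 - p * r := by
    have hterm : ∀ x : Fin K → Bool, Pxy x z
        = (if z = x then Px x * r else 0) + Px x * (1 - r) := by
      intro x
      rw [hPxy]
      by_cases h : z = x
      · subst h; simp
        all_goals ring
      · simp [h]
        all_goals ring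
    simp only [hPy]
    rw [Finset.sum_congr rfl (fun x _ => hterm x), Finset.sum_add_distrib,
        Finset.sum_ite_eq univ z (fun x => Px x * r), if_pos (mem_univ z),
        ← Finset.sum_mul, hsum, hPxz]
    ring
  have hPyx : ∀ y, y ≠ z → Py y = p / N * r := by
    intro y hy
    have hterm : ∀ x : Fin K → Bool, Pxy x y
        = (if y = x then Px x * r else 0) := by
      intro x
      rw [hPxy]
      by_cases h : y = x
      · subst h; simp [hy]
        all_goals ring
      · simp [h, hy]
    simp only [hPy]
    rw [Finset.sum_congr rfl (fun x _ => hterm x),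
        Finset.sum_ite_eq univ y (fun x => Px x * r), if_pos (mem_univ y),
        hPxx y hy]
  -- inner sums
  have inner_z : (∑ y, Pxy z y * Real.log (Pxy z y / (Px z * Py y)))
      = -((1 - p) * Real.log (1 - p * r)) := by
    rw [Finset.sum_eq_single z (fun y _ hy => by rw [hPxy_z y hy]; simp)
        (fun h => absurd (mem_univ z) h)]
    rw [hPxy_zz, hPxz, hPyz]
    exact aux_log (1 - p) (1 - p * r) h1p h1pr
  have inner_x : ∀ x, x ≠ z →
      (∑ y, Pxy x y * Real.log (Pxy x y / (Px x * Py y)))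
      = p / N * r * Real.log (N / p)
        + p / N * (1 - r) * Real.log ((1 - r) / (1 - p * r)) := by
    intro x hx
    have hsub : (∑ y, Pxy x y * Real.log (Pxy x y / (Px x * Py y)))
        = ∑ y ∈ ({x, z} : Finset (Fin K → Bool)),
            Pxy x y * Real.log (Pxy x y / (Px x * Py y)) := by
      refine (Finset.sum_subset (Finset.subset_univ _) ?_).symm
      intro y _ hy
      simp only [Finset.mem_insert, Finset.mem_singleton, not_or] at hy
      rw [hPxy_other x y hy.1 hy.2]; simp
    rw [hsub, Finset.sum_pair hx, hPxy_xx x hx, hPxy_xz x hx, hPxx x hx,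
        hPyx x hx, hPyz]
    have e1 : p / N * r / (p / N * (p / N * r)) = N / p := by
      field_simp
    have e2 : p / N * (1 - r) / (p / N * (1 - p * r)) = (1 - r) / (1 - p * r) := by
      field_simp
    rw [e1, e2]
  -- outer sum
  have houter : (∑ x, ∑ y, Pxy x y * Real.log (Pxy x y / (Px x * Py y)))
      = -((1 - p) * Real.log (1 - p * r))
        + N * (p / N * r * Real.log (N / p)
          + p / N * (1 - r) * Real.log ((1 - r) / (1 - p * r))) := by
    rw [← Finset.add_sum_erase _ _ (mem_univ z), inner_z,
        Finset.sum_congr rfl (fun x hx => inner_x x (Finset.ne_of_mem_erase hx)),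
        Finset.sum_const, nsmul_eq_mul, hcard]
  rw [houter]
  congr 1
  rw [Real.log_div hNne hp0.ne', Real.log_div h1r.ne' h1pr.ne']
  unfold binEnt
  rw [Real.log_mul hp0.ne' hr0.ne']
  field_simp
  ring
end
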